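/- Let K be a field with a non-archimedean absolute value and let f, g be monic polynomials over K of degrees d > e ≥ 1 with all coefficients of absolute value ≤ 1. Suppose (x_0, x_1, x_2, …) is a sequence in K with g(x_{n+1}) = f(x_n) for all n and |x_0| > 1. Then |x_n| = |x_0|^{(d/e)^n} for all n ≥ 0; in particular |x_n| → ∞ as n → ∞. -/

import Mathlib

open Polynomial Filter

/-- If all coefficients have norm ≤ 1 and ‖x‖ ≤ 1, then ‖p(x)‖ ≤ 1. -/
lemma aux_eval_le_one {K : Type*} [NormedField K] [IsUltrametricDist K]
    (p : Polynomial K) (hc : ∀ i, ‖p.coeff i‖ ≤ 1) {x : K} (hx : ‖x‖ ≤ 1) :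
    ‖p.eval x‖ ≤ 1 := by
  rw [Polynomial.eval_eq_sum_range]
  apply IsUltrametricDist.norm_sum_le_of_forall_le_of_nonneg zero_le_one
  intro i _
  calc ‖p.coeff i * x ^ i‖ = ‖p.coeff i‖ * ‖x‖ ^ i := by rw [norm_mul, norm_pow]
    _ ≤ 1 * 1 := mul_le_mul (hc i) (pow_le_one₀ (norm_nonneg x) hx)
        (by positivity) zero_le_one
    _ = 1 := one_mul 1

/-- If p is monic of degree ≥ 1 with integral coefficients and ‖x‖ > 1,
then ‖p(x)‖ = ‖x‖ ^ deg p. -/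
lemma aux_eval_norm {K : Type*} [NormedField K] [IsUltrametricDist K]
    (p : Polynomial K) (hp : p.Monic) (hd : 1 ≤ p.natDegree)
    (hc : ∀ i, ‖p.coeff i‖ ≤ 1) {x : K} (hx : 1 < ‖x‖) :
    ‖p.eval x‖ = ‖x‖ ^ p.natDegree := by
  set n := p.natDegree with hn
  have hx0 : (0 : ℝ) < ‖x‖ := lt_trans one_pos hx
  have heval : p.eval x = (∑ i ∈ Finset.range n, p.coeff i * x ^ i) + x ^ n := by
    rw [Polynomial.eval_eq_sum_range, Finset.sum_range_succ, hp.coeff_natDegree, one_mul]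
  have hS : ‖∑ i ∈ Finset.range n, p.coeff i * x ^ i‖ ≤ ‖x‖ ^ (n - 1) := by
    apply IsUltrametricDist.norm_sum_le_of_forall_le_of_nonneg (by positivity)
    intro i hi
    rw [Finset.mem_range] at hi
    calc ‖p.coeff i * x ^ i‖ = ‖p.coeff i‖ * ‖x‖ ^ i := by rw [norm_mul, norm_pow]
      _ ≤ 1 * ‖x‖ ^ i := by
          apply mul_le_mul_of_nonneg_right (hc i) (by positivity)
      _ = ‖x‖ ^ i := one_mul _
      _ ≤ ‖x‖ ^ (n - 1) := pow_le_pow_right₀ (le_of_lt hx) (by omega)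
  have hlt : ‖x‖ ^ (n - 1) < ‖x‖ ^ n := pow_lt_pow_right₀ hx (by omega)
  have hne : ‖∑ i ∈ Finset.range n, p.coeff i * x ^ i‖ ≠ ‖x ^ n‖ := by
    rw [norm_pow]
    exact ne_of_lt (lt_of_le_of_lt hS hlt)
  rw [heval, IsUltrametricDist.norm_add_eq_max_of_norm_ne_norm hne, norm_pow]
  exact max_eq_right (le_of_lt (lt_of_le_of_lt hS hlt))

/-- Good reduction: if `g(x_{n+1}) = f(x_n)` for all `n` with `|x_0| > 1`, then
`|x_n| = |x_0|^{(d/e)^n}`, and `|x_n| → ∞`. -/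
theorem stmt_14 (K : Type*) [NormedField K] [IsUltrametricDist K]
    (d e : ℕ) (he : 1 ≤ e) (hde : e < d)
    (f g : Polynomial K) (hf : f.Monic) (hg : g.Monic)
    (hfd : f.natDegree = d) (hge : g.natDegree = e)
    (hfint : ∀ i, ‖f.coeff i‖ ≤ 1) (hgint : ∀ i, ‖g.coeff i‖ ≤ 1)
    (x : ℕ → K) (hx : ∀ n, g.eval (x (n + 1)) = f.eval (x n)) (hx0 : 1 < ‖x 0‖) :
    (∀ n, ‖x n‖ = ‖x 0‖ ^ (((d : ℝ) / (e : ℝ)) ^ n)) ∧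
      Tendsto (fun n => ‖x n‖) atTop atTop := by
  have hb0 : (0 : ℝ) < ‖x 0‖ := lt_trans one_pos hx0
  have he' : (0 : ℝ) < (e : ℝ) := by exact_mod_cast he
  have key : ∀ n, 1 < ‖x n‖ ∧ ‖x n‖ = ‖x 0‖ ^ (((d : ℝ) / (e : ℝ)) ^ n) := by
    intro n
    induction n with
    | zero => exact ⟨hx0, by simp⟩
    | succ n ih =>
      obtain ⟨h1, h2⟩ := ih
      have hfn : ‖f.eval (x n)‖ = ‖x n‖ ^ d := by
        rw [← hfd]; exact aux_eval_norm f hf (by omega) hfint h1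
      have hgt1 : 1 < ‖x n‖ ^ d := one_lt_pow₀ h1 (by omega)
      have hxn1 : 1 < ‖x (n + 1)‖ := by
        by_contra h
        push_neg at h
        have := aux_eval_le_one g hgint h
        rw [hx n, hfn] at this
        linarith
      have hgn : ‖x (n + 1)‖ ^ e = ‖x n‖ ^ d := by
        have := aux_eval_norm g hg (by omega) hgint hxn1
        rw [hx n, hfn, hge] at this
        exact this.symm
      have hx1pos : (0 : ℝ) < ‖x (n + 1)‖ := lt_trans one_pos hxn1
      refine ⟨hxn1, ?_⟩
      -- take e-th root on both sides via rpow
      have : ‖x (n + 1)‖ = (‖x n‖ ^ (d : ℝ)) ^ ((e : ℝ)⁻¹) := by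
        rw [Real.rpow_natCast (‖x n‖) d, ← hgn, ← Real.rpow_natCast (‖x (n+1)‖) e,
          ← Real.rpow_mul (le_of_lt hx1pos), mul_inv_cancel₀ (ne_of_gt he'),
          Real.rpow_one]
      rw [this, h2]
      rw [← Real.rpow_mul (le_of_lt hb0), ← Real.rpow_mul (le_of_lt hb0)]
      congr 1
      field_simp
      rw [pow_succ, ← mul_assoc, mul_comm (e : ℝ), mul_assoc,
        mul_comm (e : ℝ), div_mul_cancel₀ (d : ℝ) (ne_of_gt he'), mul_comm]
  refine ⟨fun n => (key n).2, ?_⟩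
  have hde' : (1 : ℝ) < (d : ℝ) / (e : ℝ) := by
    rw [lt_div_iff₀ he', one_mul]
    exact_mod_cast hde
  have hexp : Tendsto (fun n : ℕ => ((d : ℝ) / (e : ℝ)) ^ n) atTop atTop :=
    tendsto_pow_atTop_atTop_of_one_lt hde'
  have hrpow : Tendsto (fun t : ℝ => ‖x 0‖ ^ t) atTop atTop := by
    have hlog : (0 : ℝ) < Real.log ‖x 0‖ := Real.log_pos hx0
    simp_rw [Real.rpow_def_of_pos hb0, mul_comm (Real.log ‖x 0‖)]
    exact Real.tendsto_exp_atTop.comp (Tendsto.atTop_mul_const hlog tendsto_id)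
  have := hrpow.comp hexp
  apply this.congr
  intro n
  exact ((key n).2).symm
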